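/- For every d ≥ 3 one has θ(d) > 1, where θ(d) = (d/(2π)^d) ∫_{(−π,π]^d} dp / E(p). -/

import Mathlib

open MeasureTheory Real Set

namespace OneLtThetaAux



/-- `1 - cos x ≥ (2/π²) x²` for `|x| ≤ π`. -/
lemma sq_le_one_sub_cos {x : ℝ} (hx : |x| ≤ π) :
    2 / π ^ 2 * x ^ 2 ≤ 1 - Real.cos x := by
  have key : ∀ y : ℝ, 0 ≤ y → y ≤ π → 2 / π ^ 2 * y ^ 2 ≤ 1 - Real.cos y := by
    intro y hy0 hyπ
    have h1 : 1 - Real.cos y = 2 * Real.sin (y / 2) ^ 2 := by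
      have := Real.sin_sq_eq_half_sub (y / 2)
      rw [mul_div_cancel₀ y (two_ne_zero)] at this
      rw [this]; ring
    have h2 : 2 / π * (y / 2) ≤ Real.sin (y / 2) :=
      Real.mul_le_sin (by linarith) (by linarith)
    have h3 : (2 / π * (y / 2)) ^ 2 ≤ Real.sin (y / 2) ^ 2 := by
      apply pow_le_pow_left₀ (by positivity) h2
    have hπ := Real.pi_pos
    rw [h1]
    have : (2 / π * (y / 2)) ^ 2 = y ^ 2 / π ^ 2 := by
      field_simp
    have h4 : y ^ 2 / π ^ 2 ≤ Real.sin (y / 2) ^ 2 := this ▸ h3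
    have e : 2 / π ^ 2 * y ^ 2 = 2 * (y ^ 2 / π ^ 2) := by ring
    linarith
  rcases abs_cases x with ⟨h1, h2⟩ | ⟨h1, h2⟩
  · exact key x h2 (h1 ▸ hx)
  · have := key (-x) (by linarith) (by rw [← h1]; exact hx)
    simpa [Real.cos_neg] using this
lemma one_sub_cos_pos {x : ℝ} (hx0 : x ≠ 0) (hx : |x| ≤ π) :
    0 < 1 - Real.cos x := by
  have := sq_le_one_sub_cos hx
  have hπ := Real.pi_pos
  have h2 : (0:ℝ) < x ^ 2 := by positivity
  have h3 : (0:ℝ) < 2 / π ^ 2 * x ^ 2 := by positivity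
  linarith

lemma one_sub_cos_nonneg (x : ℝ) : 0 ≤ 1 - Real.cos x := by
  nlinarith [Real.cos_le_one x]

/-- integrability of `|x| ^ (-(2/3))` on `(-π, π]`. -/
lemma integrableOn_abs_rpow :
    IntegrableOn (fun x : ℝ => |x| ^ (-(2/3) : ℝ)) (Ioc (-π) π) := by
  have hπ := Real.pi_pos
  have h0 : IntegrableOn (fun x : ℝ => x ^ (-(2/3) : ℝ)) (Ioc 0 π) := by
    rw [← intervalIntegrable_iff_integrableOn_Ioc_of_le hπ.le]
    exact intervalIntegral.intervalIntegrable_rpow' (by norm_num)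
  have h1 : IntervalIntegrable (fun x : ℝ => |x| ^ (-(2/3) : ℝ)) volume 0 π := by
    rw [intervalIntegrable_iff_integrableOn_Ioc_of_le hπ.le]
    exact h0.congr_fun (fun x hx => by rw [abs_of_pos hx.1]) measurableSet_Ioc
  have h2 : IntervalIntegrable (fun x : ℝ => |x| ^ (-(2/3) : ℝ)) volume (-π) 0 := by
    have := ((IntervalIntegrable.iff_comp_neg enorm_ne_top).mp h1)
    simp only [neg_zero, abs_neg] at this
    exact this.symm
  have h3 := h2.trans h1
  rw [intervalIntegrable_iff, uIoc_of_le (by linarith)] at h3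
  exact h3




lemma continuous_E (d : ℕ) : Continuous (fun p : Fin d → ℝ => ∑ j, (1 - Real.cos (p j))) :=
  continuous_finset_sum _ fun j _ =>
    continuous_const.sub (Real.continuous_cos.comp (continuous_apply j))

lemma integrableOn_one_div_E {d : ℕ} (hd : 3 ≤ d) :
    IntegrableOn (fun p : Fin d → ℝ => 1 / ∑ j, (1 - Real.cos (p j)))
      (Set.univ.pi fun _ => Ioc (-π) π) := by
  have hπ := Real.pi_pos
  set S : Set (Fin d → ℝ) := Set.univ.pi fun _ => Ioc (-π) π with hS_def
  have hS : MeasurableSet S := MeasurableSet.univ_pi fun _ => measurableSet_Ioc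
  set E : (Fin d → ℝ) → ℝ := fun p => ∑ j, (1 - Real.cos (p j)) with hE_def
  -- indices
  set j₀ : Fin d := ⟨0, by omega⟩ with hj₀
  set j₁ : Fin d := ⟨1, by omega⟩ with hj₁
  set j₂ : Fin d := ⟨2, by omega⟩ with hj₂
  have h01 : j₀ ≠ j₁ := Fin.ne_of_val_ne (by norm_num)
  have h02 : j₀ ≠ j₂ := Fin.ne_of_val_ne (by norm_num)
  have h12 : j₁ ≠ j₂ := Fin.ne_of_val_ne (by norm_num)
  set T : Finset (Fin d) := {j₀, j₁, j₂} with hT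
  have hmemT : ∀ j : Fin d, j ∈ T ↔ (j : ℕ) < 3 := by
    intro j
    simp only [hT, Finset.mem_insert, Finset.mem_singleton, Fin.ext_iff, hj₀, hj₁, hj₂]
    omega
  -- the majorant
  set e : Fin d → ℝ := fun j => if (j : ℕ) < 3 then -(2/3 : ℝ) else 0 with he
  set H : Fin d → ℝ → ℝ := fun j t => (Ioc (-π) π).indicator (fun x => |x| ^ (e j)) t with hH
  have hH_nonneg : ∀ j t, 0 ≤ H j t := fun j t =>
    indicator_nonneg (fun x _ => Real.rpow_nonneg (abs_nonneg x) _) t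
  have hH_int : ∀ j, Integrable (H j) := by
    intro j
    rw [hH, integrable_indicator_iff measurableSet_Ioc]
    by_cases h : (j : ℕ) < 3
    · simpa [he, h] using integrableOn_abs_rpow
    · simp only [he, h, if_false, Real.rpow_zero]
      exact integrableOn_const measure_Ioc_lt_top.ne
  have hprod : Integrable (fun p : Fin d → ℝ => ∏ j, H j (p j)) :=
    Integrable.fintype_prod (𝕜 := ℝ) hH_int
  have hEm : Measurable E := (continuous_E d).measurable
  have hfm : AEStronglyMeasurable (S.indicator fun p => 1 / E p) volume :=
    ((measurable_const.div hEm).indicator hS).aestronglyMeasurable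
  rw [← integrable_indicator_iff hS]
  apply Integrable.mono' (hprod.const_mul (π ^ 2 / 6)) hfm
  -- null set
  have hhyp : ∀ j : Fin d, volume {p : Fin d → ℝ | p j = 0} = 0 := fun j => by
    rw [volume_pi]; exact Measure.pi_hyperplane _ j 0
  have hN : volume ({p : Fin d → ℝ | p j₀ = 0} ∪ {p | p j₁ = 0} ∪ {p | p j₂ = 0}) = 0 :=
    measure_union_null (measure_union_null (hhyp _) (hhyp _)) (hhyp _)
  filter_upwards [compl_mem_ae_iff.mpr hN] with p hp
  simp only [mem_compl_iff, mem_union, mem_setOf_eq, not_or] at hp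
  obtain ⟨⟨hp0, hp1⟩, hp2⟩ := hp
  by_cases hpS : p ∈ S
  · rw [indicator_of_mem hpS]
    have hmem : ∀ j, p j ∈ Ioc (-π) π := fun j => hpS j (mem_univ _)
    have habs : ∀ j, |p j| ≤ π := fun j => abs_le.mpr ⟨(hmem j).1.le, (hmem j).2⟩
    set u := (p j₀) ^ 2 with hu
    set v := (p j₁) ^ 2 with hv
    set w := (p j₂) ^ 2 with hw
    have hu0 : 0 < u := by positivity
    have hv0 : 0 < v := by positivity
    have hw0 : 0 < w := by positivity
    have hsumT : 2 / π ^ 2 * (u + v + w) ≤ ∑ j ∈ T, (1 - Real.cos (p j)) := by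
      have hTsum : ∑ j ∈ T, (1 - Real.cos (p j)) =
          (1 - Real.cos (p j₀)) + (1 - Real.cos (p j₁)) + (1 - Real.cos (p j₂)) := by
        rw [hT, Finset.sum_insert (by simp [h01, h02]),
          Finset.sum_insert (by simp [h12]), Finset.sum_singleton]
        ring
      rw [hTsum]
      have b0 := sq_le_one_sub_cos (habs j₀)
      have b1 := sq_le_one_sub_cos (habs j₁)
      have b2 := sq_le_one_sub_cos (habs j₂)
      rw [hu, hv, hw]; linarith
    have hsum : ∑ j ∈ T, (1 - Real.cos (p j)) ≤ E p := by
      apply Finset.sum_le_sum_of_subset_of_nonneg (Finset.subset_univ T)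
      exact fun j _ _ => one_sub_cos_nonneg _
    have hAM : 3 * (u * v * w) ^ ((1:ℝ)/3) ≤ u + v + w := by
      have hg := Real.geom_mean_le_arith_mean3_weighted
        (by norm_num : (0:ℝ) ≤ 1/3) (by norm_num : (0:ℝ) ≤ 1/3) (by norm_num : (0:ℝ) ≤ 1/3)
        hu0.le hv0.le hw0.le (by norm_num)
      have hm : (u * v * w) ^ ((1:ℝ)/3) = u ^ ((1:ℝ)/3) * v ^ ((1:ℝ)/3) * w ^ ((1:ℝ)/3) := by
        rw [Real.mul_rpow (by positivity) hw0.le, Real.mul_rpow hu0.le hv0.le]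
      rw [hm]; linarith
    set q := (u * v * w) ^ ((1:ℝ)/3) with hq
    have hq0 : 0 < q := Real.rpow_pos_of_pos (by positivity) _
    have hE_lb : 6 / π ^ 2 * q ≤ E p := by
      have := mul_le_mul_of_nonneg_left hAM (by positivity : (0:ℝ) ≤ 2 / π ^ 2)
      calc 6 / π ^ 2 * q = 2 / π ^ 2 * (3 * q) := by ring
        _ ≤ 2 / π ^ 2 * (u + v + w) := this
        _ ≤ ∑ j ∈ T, (1 - Real.cos (p j)) := hsumT
        _ ≤ E p := hsum
    have hE_pos : 0 < E p := lt_of_lt_of_le (by positivity) hE_lb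
    have h1E : 1 / E p ≤ 1 / (6 / π ^ 2 * q) :=
      one_div_le_one_div_of_le (by positivity) hE_lb
    have hrhs : 1 / (6 / π ^ 2 * q) = π ^ 2 / 6 * q⁻¹ := by
      field_simp
    -- compute the product
    have hHeq : ∀ j, H j (p j) = |p j| ^ (e j) := fun j => indicator_of_mem (hmem j) _
    have hprodeq : ∏ j, H j (p j) = q⁻¹ := by
      have h1 : ∏ j, H j (p j) = ∏ j ∈ T, |p j| ^ (e j) := by
        simp_rw [hHeq]
        exact (Finset.prod_subset (Finset.subset_univ T) (fun j _ hj => by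
          rw [he]; simp only [(hmemT j).not.mp hj, if_false, Real.rpow_zero])).symm
      have hexp : ∀ x : ℝ, x ≠ 0 → (x ^ 2 : ℝ) ^ (-(1/3) : ℝ) = |x| ^ (-(2/3) : ℝ) := by
        intro x hx
        rw [← sq_abs, ← Real.rpow_natCast |x| 2, ← Real.rpow_mul (abs_nonneg _)]
        norm_num
      have he0 : e j₀ = -(2/3 : ℝ) := by simp [he, hj₀]
      have he1 : e j₁ = -(2/3 : ℝ) := by simp [he, hj₁]
      have he2 : e j₂ = -(2/3 : ℝ) := by simp [he, hj₂]
      rw [h1, hT, Finset.prod_insert (by simp [h01, h02]),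
        Finset.prod_insert (by simp [h12]), Finset.prod_singleton, he0, he1, he2,
        ← hexp _ hp0, ← hexp _ hp1, ← hexp _ hp2, hq, ← Real.rpow_neg_one q,
        hq, ← Real.rpow_mul (by positivity), Real.mul_rpow (by positivity) hw0.le,
        Real.mul_rpow hu0.le hv0.le]
      norm_num
      simp only [← hu, ← hv, ← hw]
      ring
    rw [Real.norm_eq_abs, abs_of_nonneg (by positivity : (0:ℝ) ≤ 1 / E p), hprodeq]
    calc 1 / E p ≤ 1 / (6 / π ^ 2 * q) := h1E
      _ = π ^ 2 / 6 * q⁻¹ := hrhs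
  · rw [indicator_of_notMem hpS]
    simp only [norm_zero]
    exact mul_nonneg (by positivity) (Finset.prod_nonneg fun j _ => hH_nonneg j (p j))



lemma int1d_const : ∫ x in Ioc (-π:ℝ) π, (1:ℝ) = 2*π := by
  rw [setIntegral_const, measureReal_def, Real.volume_Ioc, smul_eq_mul, mul_one,
    ENNReal.toReal_ofReal (by linarith [Real.pi_pos])]
  ring

lemma int1d_cos : ∫ x in Ioc (-π:ℝ) π, (1 - Real.cos x) = 2*π := by
  have hπ := Real.pi_pos
  rw [← intervalIntegral.integral_of_le (by linarith)]
  rw [intervalIntegral.integral_sub intervalIntegrable_const intervalIntegral.intervalIntegrable_cos,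
    integral_cos, intervalIntegral.integral_const]
  simp [Real.sin_pi]
  ring

lemma volS (d : ℕ) :
    volume (Set.univ.pi fun _ : Fin d => Ioc (-π) π) = ENNReal.ofReal (2*π) ^ d := by
  rw [volume_pi_pi]
  simp only [Real.volume_Ioc, sub_neg_eq_add]
  rw [Finset.prod_const, Finset.card_univ, Fintype.card_fin]
  norm_num [two_mul]

lemma setIntegral_term (d : ℕ) (j : Fin d) :
    ∫ p : Fin d → ℝ in (Set.univ.pi fun _ => Ioc (-π) π), (1 - Real.cos (p j)) = (2*π)^d := by
  have hπ := Real.pi_pos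
  set S : Set (Fin d → ℝ) := Set.univ.pi fun _ => Ioc (-π) π with hS_def
  have hS : MeasurableSet S := MeasurableSet.univ_pi fun _ => measurableSet_Ioc
  set G : Fin d → ℝ → ℝ :=
    fun i t => (Ioc (-π) π).indicator (fun x => if i = j then 1 - Real.cos x else 1) t with hG
  have claim : S.indicator (fun p : Fin d → ℝ => 1 - Real.cos (p j))
      = fun p => ∏ i, G i (p i) := by
    funext p
    by_cases hp : p ∈ S
    · rw [indicator_of_mem hp]
      have h1 : ∀ i, G i (p i) = if i = j then 1 - Real.cos (p i) else 1 := fun i =>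
        indicator_of_mem (hp i (mem_univ _)) _
      simp_rw [h1]
      rw [Finset.prod_ite_eq' Finset.univ j (fun i => 1 - Real.cos (p i))]
      simp
    · rw [indicator_of_notMem hp]
      rw [hS_def, Set.mem_univ_pi, not_forall] at hp
      obtain ⟨i₀, hi₀⟩ := hp
      exact (Finset.prod_eq_zero (Finset.mem_univ i₀) (indicator_of_notMem hi₀ _)).symm
  rw [← integral_indicator hS, claim,
    MeasureTheory.integral_fintype_prod_volume_eq_prod (𝕜 := ℝ) G]
  have h2 : ∀ i, ∫ x : ℝ, G i x = 2*π := by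
    intro i
    rw [hG]
    rw [integral_indicator measurableSet_Ioc]
    by_cases h : i = j
    · simp only [h, if_true]
      exact int1d_cos
    · simp only [h, if_false]
      exact int1d_const
  simp_rw [h2]
  rw [Finset.prod_const, Finset.card_univ, Fintype.card_fin]

lemma integrableOn_term (d : ℕ) (j : Fin d) :
    IntegrableOn (fun p : Fin d → ℝ => 1 - Real.cos (p j))
      (Set.univ.pi fun _ => Ioc (-π) π) := by
  apply Measure.integrableOn_of_bounded (M := 2)
  · rw [volS]; exact (ENNReal.pow_lt_top ENNReal.ofReal_lt_top).ne
  · exact (continuous_const.sub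
      (Real.continuous_cos.comp (continuous_apply j))).aestronglyMeasurable
  · filter_upwards with p
    rw [Real.norm_eq_abs, abs_le]
    constructor <;> nlinarith [Real.cos_le_one (p j), Real.neg_one_le_cos (p j)]

lemma setIntegral_E (d : ℕ) :
    ∫ p : Fin d → ℝ in (Set.univ.pi fun _ => Ioc (-π) π),
      (∑ j, (1 - Real.cos (p j))) = d * (2*π)^d := by
  rw [integral_finset_sum _ (fun j _ => integrableOn_term d j)]
  simp_rw [setIntegral_term d]
  rw [Finset.sum_const, Finset.card_univ, Fintype.card_fin, nsmul_eq_mul]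


end OneLtThetaAux

open MeasureTheory Real OneLtThetaAux

/-- For every `d ≥ 3`, one has `θ(d) > 1`, where
`θ(d) = (d / (2π)^d) ∫_{(-π,π]^d} dp / E(p)` and `E(p) = ∑_j (1 - cos p_j)`. -/
theorem one_lt_theta (d : ℕ) (hd : 3 ≤ d) :
    1 < ((d : ℝ) / (2 * Real.pi) ^ d) *
      ∫ p in (Set.univ.pi fun _ : Fin d => Set.Ioc (-Real.pi) Real.pi),
        1 / (∑ j : Fin d, (1 - Real.cos (p j))) := by
  have hπ := Real.pi_pos
  have hπ3 := Real.pi_gt_three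
  have hd0 : (0:ℝ) < d := by exact_mod_cast (by omega : 0 < d)
  set S : Set (Fin d → ℝ) := Set.univ.pi fun _ => Set.Ioc (-π) π with hS_def
  have hS : MeasurableSet S := MeasurableSet.univ_pi fun _ => measurableSet_Ioc
  set E : (Fin d → ℝ) → ℝ := fun p => ∑ j, (1 - Real.cos (p j)) with hE_def
  set I : ℝ := ∫ p in S, 1 / E p with hI_def
  have hvol : (volume S).toReal = (2*π)^d := by
    rw [hS_def, volS, ENNReal.toReal_pow, ENNReal.toReal_ofReal (by positivity)]
  have hvol_lt : volume S < ⊤ := by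
    rw [hS_def, volS]; exact ENNReal.pow_lt_top ENNReal.ofReal_lt_top
  have hf_int : IntegrableOn (fun p => 1 / E p) S := integrableOn_one_div_E hd
  have hE_int : IntegrableOn E S := integrable_finset_sum _ fun j _ => integrableOn_term d j
  have hconst_int : IntegrableOn (fun _ : Fin d → ℝ => (2:ℝ)/d) S :=
    integrableOn_const hvol_lt.ne
  set r : (Fin d → ℝ) → ℝ := fun p => 1 / E p - 2/d + E p / d^2 with hr_def
  have hr_int : IntegrableOn r S := (hf_int.sub hconst_int).add (hE_int.div_const _)
  -- pointwise identity and positivity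
  have hkey : ∀ p : Fin d → ℝ, 0 < E p → r p = (E p - d)^2 / (d^2 * E p) := by
    intro p hE
    rw [hr_def]
    field_simp
    ring
  have hEpos : ∀ p ∈ S, p ≠ 0 → 0 < E p := by
    intro p hpS hp0
    obtain ⟨j, hj⟩ := Function.ne_iff.mp hp0
    have hmem : p j ∈ Set.Ioc (-π) π := hpS j (Set.mem_univ _)
    have habs : |p j| ≤ π := abs_le.mpr ⟨hmem.1.le, hmem.2⟩
    have h1 : 0 < 1 - Real.cos (p j) := one_sub_cos_pos (by simpa using hj) habs
    have h2 : 1 - Real.cos (p j) ≤ E p :=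
      Finset.single_le_sum (fun i _ => one_sub_cos_nonneg (p i)) (Finset.mem_univ j)
    linarith
  have hzero : volume ({(0 : Fin d → ℝ)} : Set (Fin d → ℝ)) = 0 := by
    have hhyp0 : volume {p : Fin d → ℝ | p ⟨0, by omega⟩ = 0} = 0 := by
      rw [volume_pi]; exact Measure.pi_hyperplane _ _ 0
    refine measure_mono_null ?_ hhyp0
    intro x hx
    simp only [Set.mem_singleton_iff] at hx
    simp [hx]
  have h_nonneg : 0 ≤ᵐ[volume.restrict S] r := by
    have hne : ∀ᵐ p ∂(volume.restrict S), p ≠ 0 := by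
      refine ae_restrict_of_ae ?_
      rw [ae_iff]
      convert hzero using 2
      ext p; simp
    filter_upwards [ae_restrict_mem hS, hne] with p hpS hp0
    have hE := hEpos p hpS hp0
    rw [hkey p hE]
    positivity
  -- strict positivity of the remainder
  have hpos : 0 < ∫ p in S, r p := by
    rw [setIntegral_pos_iff_support_of_nonneg_ae h_nonneg hr_int]
    set B : Set (Fin d → ℝ) := Set.univ.pi fun _ => Set.Ioc (0:ℝ) 1 with hB_def
    have hBsub : B ⊆ Function.support r ∩ S := by
      intro p hpB
      have hmem : ∀ j, p j ∈ Set.Ioc (0:ℝ) 1 := fun j => hpB j (Set.mem_univ _)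
      have hpS : p ∈ S := by
        intro j _
        exact ⟨by linarith [(hmem j).1], by linarith [(hmem j).2]⟩
      have hp0 : p ≠ 0 := by
        intro h
        have := (hmem ⟨0, by omega⟩).1
        rw [h] at this
        simp at this
      have hE := hEpos p hpS hp0
      have hElt : E p < d := by
        have hterm : ∀ j : Fin d, 1 - Real.cos (p j) < 1 := by
          intro j
          have : 0 < Real.cos (p j) :=
            Real.cos_pos_of_mem_Ioo ⟨by linarith [(hmem j).1], by linarith [(hmem j).2]⟩
          linarith
        calc E p < ∑ _j : Fin d, (1:ℝ) :=
              Finset.sum_lt_sum_of_nonempty ⟨⟨0, by omega⟩, Finset.mem_univ _⟩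
                (fun j _ => hterm j)
          _ = d := by simp
      refine ⟨?_, hpS⟩
      rw [Function.mem_support, hkey p hE]
      have : (0:ℝ) < (E p - d)^2 / (d^2 * E p) := by
        apply div_pos (by nlinarith) (by positivity)
      exact ne_of_gt this
    have hvolB : volume B = 1 := by
      rw [hB_def, volume_pi_pi]
      simp
    calc (0:ENNReal) < 1 := by norm_num
      _ = volume B := hvolB.symm
      _ ≤ volume (Function.support r ∩ S) := measure_mono hBsub
  -- decomposition of the integral
  have h1 : ∫ p in S, r p = (∫ p in S, (1 / E p - 2/(d:ℝ))) + ∫ p in S, E p / (d:ℝ)^2 :=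
    integral_add (hf_int.sub hconst_int) (hE_int.div_const _)
  have h2 : ∫ p in S, (1 / E p - 2/(d:ℝ)) = I - ∫ p in S, (2/(d:ℝ)) := by
    rw [hI_def]
    exact integral_sub hf_int hconst_int
  have hC : ∫ (_ : Fin d → ℝ) in S, (2/(d:ℝ)) = (2*π)^d * (2/d) := by
    rw [setIntegral_const, smul_eq_mul, measureReal_def, hvol]
  have h3 : ∫ p in S, E p / (d:ℝ)^2 = (∫ p in S, E p) / (d:ℝ)^2 := integral_div _ _
  have hEint : ∫ p in S, E p = d * (2*π)^d := setIntegral_E d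
  have e1 : (d:ℝ) * (2*π)^d / (d:ℝ)^2 = (2*π)^d / d := by
    field_simp
  have e2 : (2*π)^d * (2/(d:ℝ)) - (2*π)^d / d = (2*π)^d / d := by
    field_simp
    ring
  have hI : (2*π)^d / d < I := by
    rw [h2, hC] at h1
    rw [h3, hEint, e1] at h1
    linarith
  rw [div_mul_eq_mul_div, lt_div_iff₀ (by positivity : (0:ℝ) < (2*π)^d), one_mul]
  rw [div_lt_iff₀ hd0] at hI
  linarith
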